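/- Let X be a set, A a finite index set, and for each ◇ ∈ A let g_◇ : 𝒫(X) → 𝒫(X) satisfy g_◇(∅) = ∅ and g_◇(U ∪ V) = g_◇(U) ∪ g_◇(V) for all U,V ⊆ X. (1) For every finite family 𝒬 of subsets of X, the subalgebra of (𝒫(X), ∪, ∩, complement, (g_◇)_{◇∈A}) generated by 𝒬 is finite if and only if there exists a finite partition 𝒰 of X that refines the partition X/≡_𝒬 and is g-tuned. (2) The algebra (𝒫(X),(g_◇)_{◇∈A}) is locally finite (every finitely generated subalgebra is finite) if and only if it is tunable, i.e., every finite partition of X has a finite refinement that is g-tuned. -/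

import Mathlib

set_option maxHeartbeats 1000000

/-- Modal formulas over an alphabet `A` of diamonds, with variables `pₙ`,
falsum and implication as primitive Boolean connectives. -/
inductive MF (A : Type) : Type
  | var : ℕ → MF A
  | bot : MF A
  | imp : MF A → MF A → MF A
  | dia : A → MF A → MF A

namespace MF

variable {A : Type}

def neg (φ : MF A) : MF A := .imp φ .bot
def top : MF A := neg .bot
def or (φ ψ : MF A) : MF A := .imp (neg φ) ψ
def and (φ ψ : MF A) : MF A := neg (.imp φ (neg ψ))
def box (a : A) (φ : MF A) : MF A := neg (.dia a (neg φ))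
def iff (φ ψ : MF A) : MF A := and (.imp φ ψ) (.imp ψ φ)

def bigOr : List (MF A) → MF A
  | [] => .bot
  | φ :: r => or φ (bigOr r)

def bigAnd : List (MF A) → MF A
  | [] => top
  | φ :: r => and φ (bigAnd r)

def subst (σ : ℕ → MF A) : MF A → MF A
  | .var n => σ n
  | .bot => .bot
  | .imp φ ψ => .imp (subst σ φ) (subst σ ψ)
  | .dia a φ => .dia a (subst σ φ)

/-- `φ` is a `k`-formula: all its variables are among `p₀,…,p_{k-1}`. -/
def varsBelow (k : ℕ) : MF A → Prop
  | .var n => n < k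
  | .bot => True
  | .imp φ ψ => varsBelow k φ ∧ varsBelow k ψ
  | .dia _ φ => varsBelow k φ

/-- Modal depth: maximal number of nested modalities. -/
def depth : MF A → ℕ
  | .var _ => 0
  | .bot => 0
  | .imp φ ψ => max (depth φ) (depth ψ)
  | .dia _ φ => depth φ + 1

end MF

/-- Truth in a Kripke model `(X, R, θ)` at a point. -/
def satM {A X : Type} (R : A → X → X → Prop) (θ : ℕ → Set X) : X → MF A → Prop
  | w, MF.var n => w ∈ θ n
  | _, MF.bot => False
  | w, MF.imp φ ψ => satM R θ w φ → satM R θ w ψ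
  | w, MF.dia a φ => ∃ v, R a w v ∧ satM R θ v φ

/-- Validity in a Kripke frame. -/
def validM {A X : Type} (R : A → X → X → Prop) (φ : MF A) : Prop :=
  ∀ θ w, satM R θ w φ

/-- `φ` is a substitution instance of a classical propositional tautology
(equivalently: true under every Boolean valuation treating variables and
diamond formulas as atoms). -/
def IsTautInstance {A : Type} (φ : MF A) : Prop :=
  ∀ f : MF A → Prop, ¬ f .bot → (∀ ψ χ, f (.imp ψ χ) ↔ (f ψ → f χ)) → f φ

/-- `L` is a normal modal logic over `A`. -/
structure IsNormalLogic {A : Type} (L : Set (MF A)) : Prop where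
  taut : ∀ φ : MF A, IsTautInstance φ → φ ∈ L
  dia_bot : ∀ a : A, (MF.dia a MF.bot).neg ∈ L
  dia_or : ∀ a : A,
    MF.imp (.dia a (MF.or (.var 0) (.var 1))) (MF.or (.dia a (.var 0)) (.dia a (.var 1))) ∈ L
  mp : ∀ {φ ψ : MF A}, MF.imp φ ψ ∈ L → φ ∈ L → ψ ∈ L
  subst_mem : ∀ {φ : MF A} (σ : ℕ → MF A), φ ∈ L → φ.subst σ ∈ L
  mono : ∀ (a : A) {φ ψ : MF A}, MF.imp φ ψ ∈ L → MF.imp (.dia a φ) (.dia a ψ) ∈ L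

/-- `L` is `k`-finite: there are finitely many `k`-formulas up to `L`-equivalence. -/
def kFinite {A : Type} (L : Set (MF A)) (k : ℕ) : Prop :=
  ∃ S : Finset (MF A), ∀ φ : MF A, φ.varsBelow k → ∃ ψ ∈ S, MF.iff φ ψ ∈ L

def LocallyTabular {A : Type} (L : Set (MF A)) : Prop := ∀ k : ℕ, kFinite L k

/-- `◇_S φ`, the disjunction of `◇φ` over `◇ ∈ S`. -/
noncomputable def diaS {A : Type} (S : Finset A) (φ : MF A) : MF A :=
  MF.bigOr (S.toList.map (fun a => MF.dia a φ))

/-- `(◇_S)^n φ`. -/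
noncomputable def diaSpow {A : Type} (S : Finset A) : ℕ → MF A → MF A
  | 0, φ => φ
  | n + 1, φ => diaS S (diaSpow S n φ)

/-- `◇_S^{≤ m} φ = ⋁_{i ≤ m} (◇_S)^i φ`. -/
noncomputable def diaSle {A : Type} (S : Finset A) (m : ℕ) (φ : MF A) : MF A :=
  MF.bigOr ((List.range (m + 1)).map (fun i => diaSpow S i φ))

/-- `□* φ = ¬◇_S^{≤ m}¬φ`. -/
noncomputable def boxSle {A : Type} (S : Finset A) (m : ℕ) (φ : MF A) : MF A :=
  MF.neg (diaSle S m (MF.neg φ))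

/-- The pretransitivity formula `atr_S(m) = (◇_S)^{m+1} p₀ → ◇_S^{≤m} p₀`. -/
noncomputable def atrS {A : Type} (S : Finset A) (m : ℕ) : MF A :=
  MF.imp (diaSpow S (m + 1) (.var 0)) (diaSle S m (.var 0))

/-- The finite-height formulas `B_h^{≤m}` over the compound modality `◇_S^{≤m}`:
`B₀ = ⊥`, `B_h = p_h → □*(◇* p_h ∨ B_{h-1})`. -/
noncomputable def BstarS {A : Type} (S : Finset A) (m : ℕ) : ℕ → MF A
  | 0 => .bot
  | h + 1 => MF.imp (.var (h + 1))
      (boxSle S m (MF.or (diaSle S m (.var (h + 1))) (BstarS S m h)))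

/-- Unimodal finite-height formulas: `B₀ = ⊥`, `B_h = p_h → □(◇ p_h ∨ B_{h-1})`. -/
def BformU : ℕ → MF Unit
  | 0 => .bot
  | h + 1 => MF.imp (.var (h + 1))
      (MF.box () (MF.or (MF.dia () (.var (h + 1))) (BformU h)))

/-- `p_i ∧ ◇_S (p_{i+1} ∧ ◇_S ( … ∧ ◇_S p_{i+n}) … )`. -/
noncomputable def chainS {A : Type} (S : Finset A) : ℕ → ℕ → MF A
  | i, 0 => .var i
  | i, n + 1 => MF.and (.var i) (diaS S (chainS S (i + 1) n))

/-- The list of pairs `(i, j)` with `i < j ≤ n`. -/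
def pairsLT (n : ℕ) : List (ℕ × ℕ) :=
  (List.range (n + 1)).flatMap (fun j => (List.range j).map (fun i => (i, j)))

/-- The reducible-path formula `R_m(◇_S)`. -/
noncomputable def RmS {A : Type} (S : Finset A) (m : ℕ) : MF A :=
  MF.imp (chainS S 0 (m + 1))
    (MF.or
      (MF.bigOr ((pairsLT (m + 1)).map
        (fun p => diaSpow S p.1 (MF.and (.var p.1) (.var p.2)))))
      (MF.bigOr ((pairsLT m).map
        (fun p => diaSpow S p.1 (MF.and (.var p.1) (diaS S (.var (p.2 + 1))))))))

/-- `n`-fold relational composition: `R⁰ = Id`, `R^{n+1} = R ∘ Rⁿ`. -/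
def relPow {X : Type} (R : X → X → Prop) : ℕ → X → X → Prop
  | 0 => fun a b => a = b
  | n + 1 => fun a c => ∃ b, R a b ∧ relPow R n b c

/-- Reflexive transitive closure `R* = ⋃ₙ Rⁿ`. -/
def relStar {X : Type} (R : X → X → Prop) (a b : X) : Prop := ∃ n, relPow R n a b

/-- `R` is `m`-transitive: `R^{m+1} ⊆ R^{≤ m}`. -/
def mTransitive {X : Type} (R : X → X → Prop) (m : ℕ) : Prop :=
  ∀ a b, relPow R (m + 1) a b → ∃ i ≤ m, relPow R i a b

/-- The union `R_F = ⋃_{◇ ∈ A} R_◇`. -/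
def unionRel {A X : Type} (R : A → X → X → Prop) : X → X → Prop :=
  fun a b => ∃ i, R i a b

/-- `R⁻¹[V] = {x ∣ ∃ y ∈ V, x R y}`. -/
def diaPre {X : Type} (R : X → X → Prop) (V : Set X) : Set X := {x | ∃ y ∈ V, R x y}

/-- The height of `(X, R)` is at most `h`: there is no strictly ascending
(h+1)-chain with respect to `R*`. -/
def heightLE {X : Type} (R : X → X → Prop) (h : ℕ) : Prop :=
  ¬ ∃ x : ℕ → X, ∀ i < h, relStar R (x i) (x (i + 1)) ∧ ¬ relStar R (x (i + 1)) (x i)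

/-- A partition is `R`-tuned. -/
def RTuned {X : Type} (R : X → X → Prop) (𝒰 : Set (Set X)) : Prop :=
  ∀ U ∈ 𝒰, ∀ V ∈ 𝒰, (∃ a ∈ U, ∃ b ∈ V, R a b) → ∀ a ∈ U, ∃ b ∈ V, R a b

/-- A partition is tuned in the frame `(X, (R_◇)_{◇ ∈ A})`. -/
def TunedIn {A X : Type} (R : A → X → X → Prop) (𝒰 : Set (Set X)) : Prop :=
  ∀ a : A, RTuned (R a) 𝒰

/-- `𝒰` refines `𝒱`: every block of `𝒰` is included in a block of `𝒱`. -/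
def Refines {X : Type} (𝒰 𝒱 : Set (Set X)) : Prop := ∀ U ∈ 𝒰, ∃ V ∈ 𝒱, U ⊆ V

/-- The equivalence `≡_𝒱` induced by a family of sets. -/
def famEq {X : Type} (𝒱 : Set (Set X)) (a b : X) : Prop := ∀ V ∈ 𝒱, (a ∈ V ↔ b ∈ V)

/-- The set of equivalence classes of a relation. -/
def eqClasses {X : Type} (E : X → X → Prop) : Set (Set X) := {C | ∃ x, C = {y | E x y}}

/-- Tunedness condition for abstract normal operators `g_◇` on the powerset. -/
def gTuned {A X : Type} (g : A → Set X → Set X) (𝒰 : Set (Set X)) : Prop :=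
  ∀ a : A, ∀ U ∈ 𝒰, ∀ V ∈ 𝒰, (V ∩ g a U).Nonempty → V ⊆ g a U

/-- `C` is a subalgebra of the modal algebra `(𝒫(X), ∪, ∩, ᶜ, (g_◇))`. -/
def IsSubalg {A X : Type} (g : A → Set X → Set X) (C : Set (Set X)) : Prop :=
  ∅ ∈ C ∧ Set.univ ∈ C ∧ (∀ U ∈ C, ∀ V ∈ C, U ∪ V ∈ C) ∧
    (∀ U ∈ C, ∀ V ∈ C, U ∩ V ∈ C) ∧ (∀ U ∈ C, Uᶜ ∈ C) ∧ (∀ U ∈ C, ∀ a : A, g a U ∈ C)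

/-- The subalgebra generated by `𝒬`. -/
def genAlg {A X : Type} (g : A → Set X → Set X) (𝒬 : Set (Set X)) : Set (Set X) :=
  ⋂₀ {C | IsSubalg g C ∧ 𝒬 ⊆ C}

/-- Points of a model indistinguishable by `k`-formulas of depth at most `d`. -/
def modEq {A X : Type} (R : A → X → X → Prop) (θ : ℕ → Set X) (k d : ℕ) (a b : X) : Prop :=
  ∀ φ : MF A, φ.varsBelow k → φ.depth ≤ d → (satM R θ a φ ↔ satM R θ b φ)

/-- Points of a model indistinguishable by all `k`-formulas. -/
def modEqAll {A X : Type} (R : A → X → X → Prop) (θ : ℕ → Set X) (k : ℕ) (a b : X) : Prop :=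
  ∀ φ : MF A, φ.varsBelow k → (satM R θ a φ ↔ satM R θ b φ)

/-- The modal depth of the `k`-model `(X, R, θ)` is at most `d`. -/
def mdModelLE {A X : Type} (R : A → X → X → Prop) (θ : ℕ → Set X) (k d : ℕ) : Prop :=
  ∀ e : ℕ, modEq R θ k e ≠ modEq R θ k (e + 1) → e ≤ d

/-- Bundled Kripke frames over the alphabet `A`. -/
structure KFrame (A : Type) : Type 1 where
  W : Type
  R : A → W → W → Prop

/-- The logic of a class of Kripke frames. -/
def LogC {A : Type} (𝓕 : Set (KFrame A)) : Set (MF A) :=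
  {φ | ∀ F ∈ 𝓕, validM F.R φ}

/-- `Y` is an upset of the frame: `R_◇[Y] ⊆ Y` for every `◇`. -/
def UpsetIn {A X : Type} (R : A → X → X → Prop) (Y : Set X) : Prop :=
  ∀ a : A, ∀ y ∈ Y, ∀ z, R a y z → z ∈ Y

/-- The relations of a frame restricted to a subset. -/
def restrR {A X : Type} (R : A → X → X → Prop) (Y : Set X) : A → Y → Y → Prop :=
  fun a u v => R a u.val v.val

/-- A valuation restricted to a subset. -/
def restrV {X : Type} (θ : ℕ → Set X) (Y : Set X) : ℕ → Set Y :=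
  fun n => {u | u.val ∈ θ n}

/-- The restriction `F ↾ Y` of a frame to a subset of its domain. -/
def KFrame.restrict {A : Type} (F : KFrame A) (Y : Set F.W) : KFrame A :=
  ⟨Y, restrR F.R Y⟩

/-- The induced partitions `𝒱_d`: `𝒱₀ = X/≡_𝒱` and `𝒱_{d+1}` is the quotient by
the family `𝒱_d ∪ {R_◇⁻¹[V] : ◇ ∈ A, V ∈ 𝒱_d}`. -/
def stageClasses {A X : Type} (R : A → X → X → Prop) (𝒱 : Set (Set X)) : ℕ → Set (Set X)
  | 0 => eqClasses (famEq 𝒱)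
  | d + 1 =>
      eqClasses (famEq (stageClasses R 𝒱 d ∪
        {V' | ∃ a : A, ∃ V ∈ stageClasses R 𝒱 d, V' = diaPre (R a) V}))

/-- `𝒱_ω = ⋃_d 𝒱_d`. -/
def stageUnion {A X : Type} (R : A → X → X → Prop) (𝒱 : Set (Set X)) : Set (Set X) :=
  ⋃ d : ℕ, stageClasses R 𝒱 d

/-- `md(V) = min {d ∣ V ∈ 𝒱_d}` (as an extended natural). -/
noncomputable def mdBlock {A X : Type} (R : A → X → X → Prop) (𝒱 : Set (Set X))
    (V : Set X) : ℕ∞ :=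
  ⨅ d ∈ {d : ℕ | V ∈ stageClasses R 𝒱 d}, (d : ℕ∞)

/-- `md(𝒱) = sup {md(V) ∣ V ∈ 𝒱_ω}`. -/
noncomputable def mdFam {A X : Type} (R : A → X → X → Prop) (𝒱 : Set (Set X)) : ℕ∞ :=
  ⨆ V ∈ stageUnion R 𝒱, mdBlock R 𝒱 V

/-- The modal depth of a frame: `sup` of `md(𝒱)` over finite families `𝒱`. -/
noncomputable def mdFrame {A : Type} (F : KFrame A) : ℕ∞ :=
  ⨆ 𝒱 ∈ {𝒱 : Set (Set F.W) | 𝒱.Finite}, mdFam F.R 𝒱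

/-- The modal depth of a class of frames. -/
noncomputable def mdClass {A : Type} (𝓕 : Set (KFrame A)) : ℕ∞ :=
  ⨆ F ∈ 𝓕, mdFrame F

/-- `md(L) = sup_φ min {md(ψ) ∣ φ ↔ ψ ∈ L}`. -/
noncomputable def mdLogic {A : Type} (L : Set (MF A)) : ℕ∞ :=
  ⨆ φ : MF A, ⨅ ψ ∈ {ψ : MF A | MF.iff φ ψ ∈ L}, (ψ.depth : ℕ∞)

/-- `tra(𝓕)`: the least `m` such that every frame in `𝓕` is `m`-transitive. -/
noncomputable def traClass {A : Type} (𝓕 : Set (KFrame A)) : ℕ∞ :=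
  ⨅ m ∈ {m : ℕ | ∀ F ∈ 𝓕, mTransitive (unionRel F.R) m}, (m : ℕ∞)

/-- The disjoint sum of a family of frames. -/
def disjSum {A I : Type} (F : I → KFrame A) : KFrame A where
  W := Σ i : I, (F i).W
  R a x y := ∃ (i : I) (u v : (F i).W), x = ⟨i, u⟩ ∧ y = ⟨i, v⟩ ∧ (F i).R a u v

/-- The cluster of a point: its equivalence class under `a R* b ∧ b R* a`. -/
def clusterOf {X : Type} (R : X → X → Prop) (x : X) : Set X :=
  {y | relStar R x y ∧ relStar R y x}

/-- `clust(𝓕)`: the restrictions of frames in `𝓕` to their clusters. -/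
def clustC {A : Type} (𝓕 : Set (KFrame A)) : Set (KFrame A) :=
  {G | ∃ F ∈ 𝓕, ∃ x : F.W, G = F.restrict (clusterOf (unionRel F.R) x)}

section AuxStmt1

variable {A X : Type}

lemma famEq_refl (𝒱 : Set (Set X)) (x : X) : famEq 𝒱 x x := fun _ _ => Iff.rfl

lemma famEq_symm {𝒱 : Set (Set X)} {x y : X} (h : famEq 𝒱 x y) : famEq 𝒱 y x :=
  fun V hV => (h V hV).symm

lemma famEq_trans {𝒱 : Set (Set X)} {x y z : X} (h : famEq 𝒱 x y) (h' : famEq 𝒱 y z) :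
    famEq 𝒱 x z := fun V hV => (h V hV).trans (h' V hV)

lemma class_eq_of_famEq {𝒱 : Set (Set X)} {x y : X} (h : famEq 𝒱 x y) :
    {z | famEq 𝒱 x z} = {z | famEq 𝒱 y z} := by
  ext z
  exact ⟨fun hz => famEq_trans (famEq_symm h) hz, fun hz => famEq_trans h hz⟩

lemma eqClasses_isPartition (𝒱 : Set (Set X)) :
    Setoid.IsPartition (eqClasses (famEq 𝒱)) := by
  constructor
  · rintro ⟨x, hx⟩
    have hmem : x ∈ {y | famEq 𝒱 x y} := famEq_refl 𝒱 x
    rw [← hx] at hmem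
    exact hmem
  · intro x
    refine ⟨{z | famEq 𝒱 x z}, ⟨⟨x, rfl⟩, famEq_refl 𝒱 x⟩, ?_⟩
    rintro B ⟨⟨y, rfl⟩, hxB⟩
    exact class_eq_of_famEq hxB

lemma eqClasses_finite {𝒱 : Set (Set X)} (h : 𝒱.Finite) : (eqClasses (famEq 𝒱)).Finite := by
  have key : ∀ x : X, ∀ V ∈ 𝒱, ({z | famEq 𝒱 x z} ⊆ V ↔ x ∈ V) := by
    intro x V hV
    constructor
    · exact fun hsub => hsub (famEq_refl 𝒱 x)
    · intro hxV z hz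
      exact (hz V hV).mp hxV
  apply Set.Finite.of_finite_image (f := fun C => {V | V ∈ 𝒱 ∧ C ⊆ V})
  · refine (h.finite_subsets).subset ?_
    rintro T ⟨C, _, rfl⟩ V hV
    exact hV.1
  · rintro C ⟨x, rfl⟩ D ⟨y, rfl⟩ hf
    apply class_eq_of_famEq
    intro V hV
    have hf' : {V | V ∈ 𝒱 ∧ {z | famEq 𝒱 x z} ⊆ V} =
        {V | V ∈ 𝒱 ∧ {z | famEq 𝒱 y z} ⊆ V} := hf
    have h1 : V ∈ {V | V ∈ 𝒱 ∧ {z | famEq 𝒱 x z} ⊆ V} ↔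
        V ∈ {V | V ∈ 𝒱 ∧ {z | famEq 𝒱 y z} ⊆ V} := by rw [hf']
    constructor
    · intro hx
      exact (key y V hV).mp (h1.mp ⟨hV, (key x V hV).mpr hx⟩).2
    · intro hy
      exact (key x V hV).mp (h1.mpr ⟨hV, (key y V hV).mpr hy⟩).2

lemma isSubalg_genAlg (g : A → Set X → Set X) (𝒬 : Set (Set X)) :
    IsSubalg g (genAlg g 𝒬) := by
  have hmem : ∀ U : Set X, U ∈ genAlg g 𝒬 ↔
      ∀ C ∈ {C | IsSubalg g C ∧ 𝒬 ⊆ C}, U ∈ C := fun U => Set.mem_sInter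
  refine ⟨?_, ?_, ?_, ?_, ?_, ?_⟩
  · exact (hmem _).mpr fun C hC => hC.1.1
  · exact (hmem _).mpr fun C hC => hC.1.2.1
  · intro U hU V hV
    exact (hmem _).mpr fun C hC => hC.1.2.2.1 U ((hmem _).mp hU C hC) V ((hmem _).mp hV C hC)
  · intro U hU V hV
    exact (hmem _).mpr fun C hC => hC.1.2.2.2.1 U ((hmem _).mp hU C hC) V ((hmem _).mp hV C hC)
  · intro U hU
    exact (hmem _).mpr fun C hC => hC.1.2.2.2.2.1 U ((hmem _).mp hU C hC)
  · intro U hU a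
    exact (hmem _).mpr fun C hC => hC.1.2.2.2.2.2 U ((hmem _).mp hU C hC) a

lemma subset_genAlg (g : A → Set X → Set X) (𝒬 : Set (Set X)) : 𝒬 ⊆ genAlg g 𝒬 :=
  fun _ hQ => Set.mem_sInter.mpr fun _ hC => hC.2 hQ

lemma genAlg_subset {g : A → Set X → Set X} {𝒬 C : Set (Set X)}
    (hC : IsSubalg g C) (h𝒬 : 𝒬 ⊆ C) : genAlg g 𝒬 ⊆ C :=
  Set.sInter_subset_of_mem ⟨hC, h𝒬⟩

lemma sInter_mem_subalg {g : A → Set X → Set X} {C : Set (Set X)} (hC : IsSubalg g C)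
    {F : Set (Set X)} (hF : F.Finite) (hsub : ∀ W ∈ F, W ∈ C) : ⋂₀ F ∈ C := by
  revert hsub
  refine Set.Finite.induction_on F hF (fun _ => by simpa using hC.2.1) ?_
  intro W F _ _ ih hsub
  rw [Set.sInter_insert]
  exact hC.2.2.2.1 W (hsub W (Set.mem_insert _ _)) _
    (ih fun V hV => hsub V (Set.mem_insert_of_mem _ hV))

lemma classOf_mem_subalg {g : A → Set X → Set X} {C : Set (Set X)} (hC : IsSubalg g C)
    (hfin : C.Finite) (x : X) : {y | famEq C x y} ∈ C := by
  classical
  have hFsub : ∀ W' ∈ (fun W => if x ∈ W then W else Wᶜ) '' C, W' ∈ C := by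
    rintro W' ⟨W, hW, hWe⟩
    rw [← hWe]
    by_cases h : x ∈ W
    · simpa [h] using hW
    · simpa [h] using hC.2.2.2.2.1 W hW
  have heq : {y | famEq C x y} = ⋂₀ ((fun W => if x ∈ W then W else Wᶜ) '' C) := by
    ext y
    simp only [Set.mem_sInter, Set.mem_image, Set.mem_setOf_eq]
    constructor
    · rintro h W' ⟨W, hW, hWe⟩
      rw [← hWe]
      by_cases hx : x ∈ W
      · simpa [hx] using (h W hW).mp hx
      · simp only [hx, if_false, Set.mem_compl_iff]
        exact fun hy => hx ((h W hW).mpr hy)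
    · intro h W hW
      have hiw := h _ ⟨W, hW, rfl⟩
      by_cases hx : x ∈ W
      · simp only [hx, if_true] at hiw
        exact ⟨fun _ => hiw, fun _ => hx⟩
      · simp only [hx, if_false, Set.mem_compl_iff] at hiw
        exact ⟨fun h' => absurd h' hx, fun h' => absurd h' hiw⟩
  rw [heq]
  exact sInter_mem_subalg hC (hfin.image _) hFsub

lemma g_mono {g : A → Set X → Set X}
    (hgU : ∀ (a : A) (U V : Set X), g a (U ∪ V) = g a U ∪ g a V)
    (a : A) {U V : Set X} (h : U ⊆ V) : g a U ⊆ g a V := by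
  have hv : g a V = g a U ∪ g a V := by
    rw [← hgU, Set.union_eq_self_of_subset_left h]
  rw [hv]
  exact Set.subset_union_left

lemma g_sUnion {g : A → Set X → Set X} (hg0 : ∀ a : A, g a ∅ = ∅)
    (hgU : ∀ (a : A) (U V : Set X), g a (U ∪ V) = g a U ∪ g a V)
    (a : A) {T : Set (Set X)} (hT : T.Finite) :
    g a (⋃₀ T) = ⋃ U ∈ T, g a U := by
  refine Set.Finite.induction_on T hT (by simp [hg0]) ?_
  intro U T _ _ ih
  rw [Set.sUnion_insert, hgU, ih, Set.biUnion_insert]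

lemma finite_of_tuned {g : A → Set X → Set X}
    (hg0 : ∀ a : A, g a ∅ = ∅)
    (hgU : ∀ (a : A) (U V : Set X), g a (U ∪ V) = g a U ∪ g a V)
    {𝒬 𝒰 : Set (Set X)} (hpart : Setoid.IsPartition 𝒰) (hfin : 𝒰.Finite)
    (href : Refines 𝒰 (eqClasses (famEq 𝒬))) (htun : gTuned g 𝒰) :
    (genAlg g 𝒬).Finite := by
  choose B hB using fun x => hpart.2 x
  have hB𝒰 : ∀ x, B x ∈ 𝒰 := fun x => (hB x).1.1
  have hxB : ∀ x, x ∈ B x := fun x => (hB x).1.2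
  have hBu : ∀ x U, U ∈ 𝒰 → x ∈ U → U = B x := fun x U h1 h2 => (hB x).2 U ⟨h1, h2⟩
  have hmem : ∀ T : Set (Set X), T ⊆ 𝒰 → ∀ x, (x ∈ ⋃₀ T ↔ B x ∈ T) := by
    intro T hT x
    constructor
    · rintro ⟨U, hUT, hxU⟩
      rw [← hBu x U (hT hUT) hxU]
      exact hUT
    · intro h
      exact ⟨B x, h, hxB x⟩
  set C : Set (Set X) := Set.sUnion '' {T | T ⊆ 𝒰} with hCdef
  have hCfin : C.Finite := (hfin.finite_subsets).image _
  have hsubalg : IsSubalg g C := by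
    refine ⟨⟨∅, by simp, by simp⟩, ⟨𝒰, by simp, ?_⟩, ?_, ?_, ?_, ?_⟩
    · ext x
      simp only [Set.mem_univ, iff_true]
      exact ⟨B x, hB𝒰 x, hxB x⟩
    · rintro _ ⟨T, hT, rfl⟩ _ ⟨T', hT', rfl⟩
      exact ⟨T ∪ T', Set.union_subset hT hT', Set.sUnion_union T T'⟩
    · rintro _ ⟨T, hT, rfl⟩ _ ⟨T', hT', rfl⟩
      refine ⟨T ∩ T', fun U hU => hT hU.1, ?_⟩
      ext x
      show x ∈ (⋃₀ (T ∩ T') : Set X) ↔ x ∈ (⋃₀ T : Set X) ∩ ⋃₀ T'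
      rw [hmem (T ∩ T') (fun U hU => hT hU.1) x]
      simp only [Set.mem_inter_iff, hmem T hT x, hmem T' hT' x]
    · rintro _ ⟨T, hT, rfl⟩
      refine ⟨𝒰 \ T, Set.diff_subset, ?_⟩
      ext x
      show x ∈ (⋃₀ (𝒰 \ T) : Set X) ↔ x ∈ ((⋃₀ T : Set X))ᶜ
      rw [hmem (𝒰 \ T) Set.diff_subset x]
      simp only [Set.mem_diff, hB𝒰 x, true_and, Set.mem_compl_iff, hmem T hT x]
    · rintro _ ⟨T, hT, rfl⟩ a
      have hTfin : T.Finite := hfin.subset hT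
      refine ⟨{V | V ∈ 𝒰 ∧ (V ∩ g a (⋃₀ T)).Nonempty}, fun V hV => hV.1, ?_⟩
      show ⋃₀ {V | V ∈ 𝒰 ∧ (V ∩ g a (⋃₀ T)).Nonempty} = g a (⋃₀ T)
      apply Set.Subset.antisymm
      · rintro x ⟨V, ⟨hV𝒰, hVne⟩, hxV⟩
        obtain ⟨z, hzV, hzg⟩ := hVne
        rw [g_sUnion hg0 hgU a hTfin] at hzg
        simp only [Set.mem_iUnion] at hzg
        obtain ⟨U, hUT, hzU⟩ := hzg
        have hVsub : V ⊆ g a U := htun a U (hT hUT) V hV𝒰 ⟨z, hzV, hzU⟩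
        exact g_mono hgU a (Set.subset_sUnion_of_mem hUT) (hVsub hxV)
      · intro x hx
        exact ⟨B x, ⟨hB𝒰 x, ⟨x, hxB x, hx⟩⟩, hxB x⟩
  have h𝒬C : 𝒬 ⊆ C := by
    intro Q hQ
    refine ⟨{U | U ∈ 𝒰 ∧ U ⊆ Q}, fun U hU => hU.1, ?_⟩
    show ⋃₀ {U | U ∈ 𝒰 ∧ U ⊆ Q} = Q
    apply Set.Subset.antisymm
    · rintro x ⟨U, ⟨_, hUQ⟩, hxU⟩
      exact hUQ hxU
    · intro x hx
      obtain ⟨E, ⟨y, rfl⟩, hBE⟩ := href (B x) (hB𝒰 x)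
      have hyx : famEq 𝒬 y x := hBE (hxB x)
      have hBQ : B x ⊆ Q := by
        intro w hw
        have hyw : famEq 𝒬 y w := hBE hw
        exact (hyw Q hQ).mp ((hyx Q hQ).mpr hx)
      exact ⟨B x, ⟨hB𝒰 x, hBQ⟩, hxB x⟩
  exact hCfin.subset (genAlg_subset hsubalg h𝒬C)

lemma tuned_of_finite {g : A → Set X → Set X} {𝒬 : Set (Set X)}
    (hfin : (genAlg g 𝒬).Finite) :
    ∃ 𝒰 : Set (Set X), Setoid.IsPartition 𝒰 ∧ 𝒰.Finite ∧
      Refines 𝒰 (eqClasses (famEq 𝒬)) ∧ gTuned g 𝒰 := by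
  refine ⟨eqClasses (famEq (genAlg g 𝒬)), eqClasses_isPartition _, eqClasses_finite hfin,
    ?_, ?_⟩
  · rintro U ⟨x, rfl⟩
    exact ⟨{y | famEq 𝒬 x y}, ⟨x, rfl⟩,
      fun y hy V hV => hy V (subset_genAlg g 𝒬 hV)⟩
  · rintro a U hU V hV ⟨z, hzV, hzg⟩
    obtain ⟨x, rfl⟩ := hU
    obtain ⟨y, rfl⟩ := hV
    have hUG : {w | famEq (genAlg g 𝒬) x w} ∈ genAlg g 𝒬 :=
      classOf_mem_subalg (isSubalg_genAlg g 𝒬) hfin x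
    have hgUG : g a {w | famEq (genAlg g 𝒬) x w} ∈ genAlg g 𝒬 :=
      (isSubalg_genAlg g 𝒬).2.2.2.2.2 _ hUG a
    intro w hw
    exact (hw _ hgUG).mp ((hzV _ hgUG).mpr hzg)

end AuxStmt1

/-- For normal operators `g_◇` on `𝒫(X)`:
(1) the subalgebra generated by a finite family `𝒬` is finite iff there is a finite
`g`-tuned partition refining `X/≡_𝒬`;
(2) the algebra `(𝒫(X), (g_◇))` is locally finite iff it is tunable. -/
theorem stmt1 {A X : Type} [Fintype A] (g : A → Set X → Set X)
    (hg0 : ∀ a : A, g a ∅ = ∅)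
    (hgU : ∀ (a : A) (U V : Set X), g a (U ∪ V) = g a U ∪ g a V) :
    (∀ 𝒬 : Set (Set X), 𝒬.Finite →
      ((genAlg g 𝒬).Finite ↔
        ∃ 𝒰 : Set (Set X), Setoid.IsPartition 𝒰 ∧ 𝒰.Finite ∧
          Refines 𝒰 (eqClasses (famEq 𝒬)) ∧ gTuned g 𝒰))
    ∧
    ((∀ 𝒬 : Set (Set X), 𝒬.Finite → (genAlg g 𝒬).Finite) ↔
      (∀ 𝒱 : Set (Set X), Setoid.IsPartition 𝒱 → 𝒱.Finite →
        ∃ 𝒰 : Set (Set X), Setoid.IsPartition 𝒰 ∧ 𝒰.Finite ∧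
          Refines 𝒰 𝒱 ∧ gTuned g 𝒰)) := by
  constructor
  · intro 𝒬 _
    constructor
    · exact fun h => tuned_of_finite h
    · rintro ⟨𝒰, hp, hf, hr, ht⟩
      exact finite_of_tuned hg0 hgU hp hf hr ht
  · constructor
    · intro hloc 𝒱 hp hf
      obtain ⟨𝒰, hp', hf', hr', ht'⟩ := tuned_of_finite (hloc 𝒱 hf)
      refine ⟨𝒰, hp', hf', ?_, ht'⟩
      intro U hU
      obtain ⟨E, ⟨x, rfl⟩, hUE⟩ := hr' U hU
      obtain ⟨Bx, ⟨hB𝒱, hxB⟩, _⟩ := hp.2 x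
      exact ⟨Bx, hB𝒱, fun y hy => (hUE hy Bx hB𝒱).mp hxB⟩
    · intro htun 𝒬 h𝒬
      obtain ⟨𝒰, hp, hf, hr, ht⟩ :=
        htun (eqClasses (famEq 𝒬)) (eqClasses_isPartition _) (eqClasses_finite h𝒬)
      exact finite_of_tuned hg0 hgU hp hf hr ht
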